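/- For positive integers m_{1,2}, m_{1,3}, m_{2,3}, the iterated residue Res_{x_1=0} Res_{x_2=0} of x_1^{m_{1,2}+m_{1,3}−1} x_2^{m_{2,3}−1} / (x_1^{m_{1,3}} x_2^{m_{2,3}} (x_1 − x_2)^{m_{1,2}}) equals 1. -/
import Mathlib

open Complex Metric

noncomputable def res (f : ℂ → ℂ) (r : ℝ) : ℂ :=
    (2 * Real.pi * Complex.I)⁻¹ * ∮ z in C(0, r), f z

lemma two_pi_I_ne : (2 * ↑Real.pi * Complex.I : ℂ) ≠ 0 := by
  simp [Real.pi_ne_zero, Complex.I_ne_zero, Complex.ofReal_ne_zero]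

lemma inner_res (m12 m13 m23 : ℕ) (h12 : 0 < m12) (h23 : 0 < m23)
    (x1 : ℂ) (hx1 : ‖x1‖ = 2) :
    res (fun x2 =>
        x1 ^ (m12 + m13 - 1) * x2 ^ (m23 - 1) /
          (x1 ^ m13 * x2 ^ m23 * (x1 - x2) ^ m12)) 1 = x1⁻¹ := by
  have hx1ne : x1 ≠ 0 := by
    intro h; rw [h] at hx1; norm_num at hx1
  set h : ℂ → ℂ := fun x2 => x1 ^ (m12 + m13 - 1) / (x1 ^ m13 * (x1 - x2) ^ m12) with hh
  have hsub : ∀ z : ℂ, ‖z‖ ≤ 1 → x1 - z ≠ 0 := by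
    intro z hz hzz
    have he := sub_eq_zero.mp hzz
    rw [← he, hx1] at hz
    norm_num at hz
  have heq : Set.EqOn (fun x2 : ℂ =>
      x1 ^ (m12 + m13 - 1) * x2 ^ (m23 - 1) /
        (x1 ^ m13 * x2 ^ m23 * (x1 - x2) ^ m12))
      (fun z => (z - 0)⁻¹ • h z) (sphere (0:ℂ) 1) := by
    intro z hz
    simp only [mem_sphere_iff_norm, sub_zero] at hz
    have hzne : z ≠ 0 := by intro h0; rw [h0] at hz; norm_num at hz
    have hne : x1 - z ≠ 0 := hsub z (le_of_eq hz)
    have hm : m23 = (m23 - 1) + 1 := (Nat.succ_pred_eq_of_pos h23).symm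
    simp only [smul_eq_mul, sub_zero, hh]
    rw [hm, pow_succ]
    rw [show x1 ^ m13 * (z ^ (m23 - 1) * z) * (x1 - z) ^ m12
          = z ^ (m23 - 1) * (z * (x1 ^ m13 * (x1 - z) ^ m12)) from by ring]
    simp only [Nat.add_sub_cancel]
    rw [show x1 ^ (m12 + m13 - 1) * z ^ (m23 - 1)
          = z ^ (m23 - 1) * x1 ^ (m12 + m13 - 1) from by ring,
      mul_div_mul_left _ _ (pow_ne_zero _ hzne),
      inv_mul_eq_div, div_div, mul_comm z]
  have hdiff : DiffContOnCl ℂ h (ball (0:ℂ) 1) := by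
    apply DifferentiableOn.diffContOnCl
    rw [closure_ball (0:ℂ) one_ne_zero]
    apply DifferentiableOn.div (differentiableOn_const _)
    · exact (differentiableOn_const _).mul
        (((differentiableOn_const _).sub differentiableOn_id).pow _)
    · intro z hz
      simp only [mem_closedBall, dist_zero_right] at hz
      exact mul_ne_zero (pow_ne_zero _ hx1ne) (pow_ne_zero _ (hsub z hz))
  have h0mem : (0:ℂ) ∈ ball (0:ℂ) 1 := by simp
  have key := hdiff.circleIntegral_sub_inv_smul h0mem
  unfold res
  rw [circleIntegral.integral_congr zero_le_one heq, key]
  have hM : 0 < m12 + m13 := by omega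
  have h0 : h 0 = x1⁻¹ := by
    simp only [hh, sub_zero]
    rw [← pow_add]
    rw [show m13 + m12 = (m12 + m13 - 1) + 1 by omega, pow_succ,
      div_mul_eq_div_div, div_self (pow_ne_zero _ hx1ne), one_div]
  rw [h0, smul_eq_mul, ← mul_assoc, inv_mul_cancel₀ two_pi_I_ne, one_mul]

theorem iterated_residue_monomial (m12 m13 m23 : ℕ)
    (h12 : 0 < m12) (h13 : 0 < m13) (h23 : 0 < m23) :
    res (fun x1 => res (fun x2 =>
        x1 ^ (m12 + m13 - 1) * x2 ^ (m23 - 1) /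
          (x1 ^ m13 * x2 ^ m23 * (x1 - x2) ^ m12)) 1) 2 = 1 := by
  unfold res
  have heq : Set.EqOn (fun x1 : ℂ => (2 * ↑Real.pi * Complex.I)⁻¹ * ∮ z in C(0, 1),
      x1 ^ (m12 + m13 - 1) * z ^ (m23 - 1) /
        (x1 ^ m13 * z ^ m23 * (x1 - z) ^ m12))
      (fun z => (z - 0)⁻¹) (sphere (0:ℂ) 2) := by
    intro x1 hx1
    simp only [mem_sphere_iff_norm, sub_zero] at hx1
    have := inner_res m12 m13 m23 h12 h23 x1 hx1
    unfold res at this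
    simpa using this
  rw [circleIntegral.integral_congr (by norm_num) heq,
    circleIntegral.integral_sub_inv_of_mem_ball (by simp : (0:ℂ) ∈ ball (0:ℂ) 2),
    inv_mul_cancel₀ two_pi_I_ne]
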